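/- Let G be a finite abelian group acting on a set T and let t ∈ T with stabilizer S = Stab_G(t). Then the annihilator ideal of the basis vector δ_t in the ℂ[G]-module ℂT, namely {λ ∈ ℂ[G] : λ·δ_t = 0}, equals the ideal of ℂ[G] generated by 1 − e_S. -/

import Mathlib

/-- For a subgroup `K` of a group `Γ`, the idempotent `e_K := |K|⁻¹ ∑_{k ∈ K} k` of the group
algebra `ℂ[Γ]`. -/
noncomputable def grpIdem (Γ : Type*) [CommGroup Γ] (K : Subgroup Γ) : MonoidAlgebra ℂ Γ :=
  (Nat.card K : ℂ)⁻¹ • ∑ᶠ k : K, MonoidAlgebra.of ℂ Γ (k : Γ)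

/-- Let `G` be a finite abelian group acting on a set `T`, `t ∈ T`, and
`S = Stab_G(t)`.  The annihilator of the basis vector `δ_t` of the permutation module
`ℂT = (T →₀ ℂ)` (a `ℂ[G]`-module via the representation attached to the action) is the ideal
of `ℂ[G]` generated by `1 − e_S`. -/
theorem stmt5 (G T : Type*) [CommGroup G] [Finite G] [MulAction G T] (t : T) :
    ∀ lam : MonoidAlgebra ℂ G,
      ((Representation.ofMulAction ℂ G T).asAlgebraHom lam) (MonoidAlgebra.single t (1 : ℂ)) = 0 ↔
        lam ∈ Ideal.span {1 - grpIdem G (MulAction.stabilizer G t)} := by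
  classical
  haveI := Fintype.ofFinite G
  set S := MulAction.stabilizer G t with hS
  haveI : Fintype S := Fintype.ofFinite S
  have hcard : (Nat.card S : ℂ) ≠ 0 := by
    simp [Nat.card_eq_fintype_card, Fintype.card_ne_zero]
  have he : grpIdem G S
      = (Nat.card S : ℂ)⁻¹ • ∑ k : S, MonoidAlgebra.single ((k : G)) (1 : ℂ) := by
    rw [grpIdem, finsum_eq_sum_of_fintype]
    rfl
  -- decompose a general element as a sum of singles
  have hdecomp : ∀ lam : MonoidAlgebra ℂ G,
      lam = ∑ g : G, MonoidAlgebra.single g (lam.coeff g) := by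
    intro lam
    ext x
    simp [MonoidAlgebra.coeff_sum, Finsupp.single_apply, Finset.sum_ite_eq]
  -- the action of lam on δ_t, coefficientwise
  have hact : ∀ (lam : MonoidAlgebra ℂ G) (u : T),
      (((Representation.ofMulAction ℂ G T).asAlgebraHom lam) (MonoidAlgebra.single t (1 : ℂ))).coeff u
        = ∑ g : G, if g • t = u then lam.coeff g else 0 := by
    intro lam u
    conv_lhs => rw [hdecomp lam]
    rw [map_sum, LinearMap.sum_apply, MonoidAlgebra.coeff_sum, Finset.sum_apply']
    refine Finset.sum_congr rfl fun g _ => ?_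
    rw [Representation.asAlgebraHom_single]
    simp [Representation.ofMulAction_single, Finsupp.single_apply]
  -- e_S fixes δ_t
  have hefix : ((Representation.ofMulAction ℂ G T).asAlgebraHom (grpIdem G S))
      (MonoidAlgebra.single t (1 : ℂ)) = MonoidAlgebra.single t (1 : ℂ) := by
    rw [he, map_smul, map_sum]
    have hterm : ∀ k : S, ((Representation.ofMulAction ℂ G T).asAlgebraHom
        (MonoidAlgebra.single ((k : G)) (1 : ℂ))) (MonoidAlgebra.single t (1 : ℂ))
        = MonoidAlgebra.single t (1 : ℂ) := by
      intro k
      rw [Representation.asAlgebraHom_single, one_smul, Representation.ofMulAction_single,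
        k.2]
    simp only [LinearMap.smul_apply, LinearMap.coe_sum, Finset.sum_apply, hterm,
      Finset.sum_const, Finset.card_univ]
    rw [← Nat.cast_smul_eq_nsmul ℂ, smul_smul, Nat.card_eq_fintype_card,
      inv_mul_cancel₀ (by simpa [Nat.card_eq_fintype_card] using hcard), one_smul]
  -- coefficient of lam * e_S
  have hmul : ∀ (lam : MonoidAlgebra ℂ G) (x : G),
      (lam * grpIdem G S).coeff x = (Nat.card S : ℂ)⁻¹ * ∑ s : S, lam.coeff (x * (s : G)⁻¹) := by
    intro lam x
    rw [he, mul_smul_comm, Finset.mul_sum, MonoidAlgebra.coeff_smul_apply, MonoidAlgebra.coeff_sum, Finset.sum_apply',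
      smul_eq_mul]
    congr 1
    refine Finset.sum_congr rfl fun s _ => ?_
    rw [MonoidAlgebra.coeff_mul_single_apply, mul_one]
  -- the two coset sums agree
  have hsum : ∀ (lam : MonoidAlgebra ℂ G) (x : G),
      ∑ s : S, lam.coeff (x * (s : G)⁻¹) = ∑ g : G, if g • t = x • t then lam.coeff g else 0 := by
    intro lam x
    rw [← Finset.sum_filter]
    refine Finset.sum_bij (fun (s : S) _ => x * (s : G)⁻¹) ?_ ?_ ?_ ?_
    · intro s _
      simp only [Finset.mem_filter, Finset.mem_univ, true_and]
      rw [mul_smul]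
      congr 1
      exact (MulAction.mem_stabilizer_iff.mp (S.inv_mem s.2))
    · intro a _ b _ hab
      have := mul_left_cancel hab
      ext
      exact inv_injective this
    · intro g hg
      simp only [Finset.mem_filter, Finset.mem_univ, true_and] at hg
      refine ⟨⟨g⁻¹ * x, ?_⟩, Finset.mem_univ _, ?_⟩
      · show (g⁻¹ * x) • t = t
        rw [mul_smul, ← hg, inv_smul_smul]
      · simp [mul_inv_rev]
    · intro s _
      rfl
  intro lam
  constructor
  · intro h
    rw [Ideal.mem_span_singleton]
    have hze : lam * grpIdem G S = 0 := by
      ext x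
      rw [hmul, hsum]
      have hx := Finsupp.ext_iff.mp (congrArg MonoidAlgebra.coeff h) (x • t)
      rw [hact] at hx
      simp [hx]
    exact ⟨lam, by rw [sub_mul, one_mul, mul_comm, hze, sub_zero]⟩
  · intro h
    rw [Ideal.mem_span_singleton] at h
    obtain ⟨c, rfl⟩ := h
    rw [mul_comm, map_mul, Module.End.mul_apply, map_sub, map_one, LinearMap.sub_apply,
      Module.End.one_apply, hefix, sub_self, map_zero]
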